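/- If N is an S-pure submodule of an R-module M, then there exists a submodule K of M such that K ∩ N = 0 and M/K is an S-pure essential extension of (K + N)/K. -/

import Mathlib

open Function LinearMap

universe u

variable {R : Type u}

section Defs
variable [Ring R]

/-- The lifting property defining `S`-purity of an epimorphism `g`. -/
def SPureLift (S : Set (ModuleCat.{u} R)) {B C : Type u} [AddCommGroup B] [Module R B]
    [AddCommGroup C] [Module R C] (g : B →ₗ[R] C) : Prop :=
  ∀ U ∈ S, ∀ h : U →ₗ[R] C, ∃ h' : U →ₗ[R] B, g ∘ₗ h' = h

/-- `0 → A → B → C → 0` is an `S`-pure exact sequence. -/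
def IsSPureExact (S : Set (ModuleCat.{u} R)) {A B C : Type u} [AddCommGroup A] [Module R A]
    [AddCommGroup B] [Module R B] [AddCommGroup C] [Module R C]
    (f : A →ₗ[R] B) (g : B →ₗ[R] C) : Prop :=
  Function.Injective f ∧ Function.Surjective g ∧ Function.Exact f g ∧ SPureLift S g

/-- `E` is `S`-pure injective. -/
def IsSPureInjective (S : Set (ModuleCat.{u} R)) (E : Type u) [AddCommGroup E]
    [Module R E] : Prop :=
  ∀ ⦃A B C : Type u⦄ [AddCommGroup A] [Module R A] [AddCommGroup B] [Module R B]
    [AddCommGroup C] [Module R C] (f : A →ₗ[R] B) (g : B →ₗ[R] C),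
    IsSPureExact S f g → ∀ h : A →ₗ[R] E, ∃ h' : B →ₗ[R] E, h' ∘ₗ f = h

/-- `P` is `S`-pure projective. -/
def IsSPureProjective (S : Set (ModuleCat.{u} R)) (P : Type u) [AddCommGroup P]
    [Module R P] : Prop :=
  ∀ ⦃A B C : Type u⦄ [AddCommGroup A] [Module R A] [AddCommGroup B] [Module R B]
    [AddCommGroup C] [Module R C] (f : A →ₗ[R] B) (g : B →ₗ[R] C),
    IsSPureExact S f g → ∀ h : P →ₗ[R] C, ∃ h' : P →ₗ[R] B, g ∘ₗ h' = h

/-- `N` is an `S`-pure submodule of `M`. -/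
def IsSPureSubmodule (S : Set (ModuleCat.{u} R)) {M : Type u} [AddCommGroup M] [Module R M]
    (N : Submodule R M) : Prop :=
  SPureLift S N.mkQ

/-- `φ` is an `S`-pure monomorphism. -/
def IsSPureMono (S : Set (ModuleCat.{u} R)) {M E : Type u} [AddCommGroup M] [Module R M]
    [AddCommGroup E] [Module R E] (φ : M →ₗ[R] E) : Prop :=
  Function.Injective φ ∧ IsSPureSubmodule S (LinearMap.range φ)

/-- `M` is an `S`-pure essential extension of its submodule `N`. -/
def IsSPureEssentialExtension (S : Set (ModuleCat.{u} R)) {M : Type u} [AddCommGroup M]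
    [Module R M] (N : Submodule R M) : Prop :=
  IsSPureSubmodule S N ∧
    ∀ ⦃L : Type u⦄ [AddCommGroup L] [Module R L] (φ : M →ₗ[R] L),
      IsSPureMono S (φ ∘ₗ N.subtype) → Function.Injective φ

/-- `M` is a maximal `S`-pure essential extension of its submodule `N` : `M` is an
`S`-pure essential extension of `N` and no proper extension of `M` is an `S`-pure essential
extension of (the image of) `N`. -/
def IsMaxSPureEssentialExtension (S : Set (ModuleCat.{u} R)) {M : Type u} [AddCommGroup M]
    [Module R M] (N : Submodule R M) : Prop :=
  IsSPureEssentialExtension S N ∧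
    ∀ ⦃L : Type u⦄ [AddCommGroup L] [Module R L] (ι : M →ₗ[R] L), Function.Injective ι →
      IsSPureEssentialExtension S (LinearMap.range (ι ∘ₗ N.subtype)) → Function.Surjective ι

end Defs

namespace Stmt13Aux

variable [Ring R] {M : Type u} [AddCommGroup M] [Module R M]

/-- The factor map between quotients by nested submodules. -/
def qmap (K K' : Submodule R M) (h : K ≤ K') : (M ⧸ K) →ₗ[R] M ⧸ K' :=
  Submodule.liftQ K K'.mkQ (by rwa [Submodule.ker_mkQ])

@[simp] lemma qmap_mk (K K' : Submodule R M) (h : K ≤ K') (x : M) :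
    qmap K K' h (K.mkQ x) = K'.mkQ x := rfl

@[simp] lemma qmap_mk' (K K' : Submodule R M) (h : K ≤ K') (x : M) :
    qmap K K' h (Submodule.Quotient.mk x) = Submodule.Quotient.mk x := rfl

variable (S : Set (ModuleCat.{u} R)) (N : Submodule R M)

/-- The predicate on `K` used for Zorn's lemma: `K ⊓ N = ⊥` and `(K + N)/K` is
`S`-pure in `M/K` (phrased via `M/(K ⊔ N)`). -/
def Good (K : Submodule R M) : Prop :=
  K ⊓ N = ⊥ ∧ ∀ U ∈ S, ∀ h : U →ₗ[R] M ⧸ (K ⊔ N),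
    ∃ g : U →ₗ[R] M ⧸ K, (qmap K (K ⊔ N) le_sup_left) ∘ₗ g = h

lemma good_bot (hN : IsSPureSubmodule S N) : Good S N ⊥ := by
  refine ⟨bot_inf_eq N, fun U hU h => ?_⟩
  let e := Submodule.quotEquivOfEq N (⊥ ⊔ N) (bot_sup_eq N).symm
  obtain ⟨f, hf⟩ := hN U hU ((e.symm : (M ⧸ (⊥ ⊔ N)) →ₗ[R] M ⧸ N) ∘ₗ h)
  refine ⟨(⊥ : Submodule R M).mkQ ∘ₗ f, ?_⟩
  ext u
  have h1 : N.mkQ (f u) = e.symm (h u) := LinearMap.congr_fun hf u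
  have h2 : e (N.mkQ (f u)) = h u := by rw [h1]; exact e.apply_symm_apply _
  show qmap ⊥ (⊥ ⊔ N) le_sup_left ((⊥ : Submodule R M).mkQ (f u)) = h u
  rw [qmap_mk, ← h2, Submodule.mkQ_apply, Submodule.mkQ_apply, Submodule.quotEquivOfEq_mk]

lemma good_translate {K : Submodule R M} (hK : Good S N K) :
    IsSPureSubmodule S ((K ⊔ N).map K.mkQ) := by
  intro U hU h
  let e := Submodule.quotientQuotientEquivQuotient K (K ⊔ N) le_sup_left
  obtain ⟨g, hg⟩ := hK.2 U hU ((e : _ →ₗ[R] M ⧸ (K ⊔ N)) ∘ₗ h)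
  refine ⟨g, ?_⟩
  have key : ∀ y : M ⧸ K, e (((K ⊔ N).map K.mkQ).mkQ y) = qmap K (K ⊔ N) le_sup_left y := by
    intro y
    refine Submodule.Quotient.induction_on _ y fun x => ?_
    rfl
  ext u
  have h1 : qmap K (K ⊔ N) le_sup_left (g u) = e (h u) := LinearMap.congr_fun hg u
  have := (key (g u)).trans h1
  simpa using e.injective this

/-- Chains of good submodules have good upper bounds; this is where finite
presentation of the modules in `S` is used. -/
lemma good_chain (hfp : ∀ U ∈ S, Module.FinitePresentation R U)
    (c : Set (Submodule R M)) (hc : c ⊆ {K | Good S N K}) (hchain : IsChain (· ≤ ·) c)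
    {y0 : Submodule R M} (hy0 : y0 ∈ c) :
    Good S N (sSup c) := by
  have hdir := hchain.directedOn
  constructor
  · rw [eq_bot_iff]
    rintro x ⟨hx1, hx2⟩
    obtain ⟨Ki, hKi, hxKi⟩ := (Submodule.mem_sSup_of_directed ⟨y0, hy0⟩ hdir).1 hx1
    have : x ∈ Ki ⊓ N := ⟨hxKi, hx2⟩
    rw [(hc hKi).1] at this
    exact this
  · intro U hU h
    haveI := hfp U hU
    obtain ⟨L, _, _, K₀, e, hfree, hfin, hfg⟩ :=
      (Module.FinitePresentation.equiv_quotient R U : ∃ (L : Type u) (_ : AddCommGroup L)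
          (_ : Module R L) (K : Submodule R L) (_ : U ≃ₗ[R] L ⧸ K),
          Module.Free R L ∧ Module.Finite R L ∧ K.FG)
    haveI := hfree
    obtain ⟨t, ht⟩ := hfg
    let B := Module.Free.chooseBasis R L
    have hsurj := Submodule.mkQ_surjective (sSup c ⊔ N)
    let x : Module.Free.ChooseBasisIndex R L → M :=
      fun i => Function.surjInv hsurj (h (e.symm (K₀.mkQ (B i))))
    have hx : ∀ i, (sSup c ⊔ N).mkQ (x i) = h (e.symm (K₀.mkQ (B i))) :=
      fun i => Function.surjInv_eq hsurj _
    let F : L →ₗ[R] M := B.constr ℕ x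
    have hF : (sSup c ⊔ N).mkQ ∘ₗ F =
        (h ∘ₗ (e.symm : L ⧸ K₀ →ₗ[R] U)) ∘ₗ K₀.mkQ := by
      refine B.ext fun i => ?_
      simp only [LinearMap.comp_apply]
      rw [show F (B i) = x i from B.constr_basis ℕ x i]
      exact hx i
    have hFmem : ∀ z ∈ t, F z ∈ sSup c ⊔ N := by
      intro z hz
      have hz0 : K₀.mkQ z = 0 := by
        rw [← LinearMap.mem_ker, Submodule.ker_mkQ, ← ht]
        exact Submodule.subset_span hz
      have : (sSup c ⊔ N).mkQ (F z) = 0 := by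
        have := LinearMap.congr_fun hF z
        simp only [LinearMap.comp_apply] at this
        rw [this, hz0]
        simp
      rwa [← LinearMap.mem_ker, Submodule.ker_mkQ] at this
    have dec : ∀ w : M, w ∈ sSup c ⊔ N → ∃ Kw ∈ c, w ∈ Kw ⊔ N := by
      intro w hw
      obtain ⟨k, hk, n, hn, rfl⟩ := Submodule.mem_sup.1 hw
      obtain ⟨Kw, hKw, hkKw⟩ := (Submodule.mem_sSup_of_directed ⟨y0, hy0⟩ hdir).1 hk
      exact ⟨Kw, hKw, Submodule.mem_sup.2 ⟨k, hkKw, n, hn, rfl⟩⟩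
    classical
    have common : ∀ s : Finset L, (∀ z ∈ s, F z ∈ sSup c ⊔ N) →
        ∃ Ki ∈ c, ∀ z ∈ s, F z ∈ Ki ⊔ N := by
      intro s
      induction s using Finset.induction_on with
      | empty => exact fun _ => ⟨y0, hy0, by simp⟩
      | @insert a s ha ih =>
        intro hs
        obtain ⟨Ki, hKi, hKi'⟩ := ih fun z hz => hs z (Finset.mem_insert_of_mem hz)
        obtain ⟨Ka, hKa, hKa'⟩ := dec _ (hs a (Finset.mem_insert_self a s))
        rcases hchain.total hKi hKa with hle | hle
        · refine ⟨Ka, hKa, fun z hz => ?_⟩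
          rcases Finset.mem_insert.1 hz with rfl | hz
          · exact hKa'
          · exact (sup_le_sup_right hle N) (hKi' z hz)
        · refine ⟨Ki, hKi, fun z hz => ?_⟩
          rcases Finset.mem_insert.1 hz with rfl | hz
          · exact (sup_le_sup_right hle N) hKa'
          · exact hKi' z hz
    obtain ⟨Ki, hKi, hKit⟩ := common t hFmem
    have hle : Ki ⊔ N ≤ sSup c ⊔ N := sup_le_sup_right (le_sSup hKi) N
    have hleK : Ki ≤ sSup c := le_sSup hKi
    let f : L →ₗ[R] M ⧸ (Ki ⊔ N) := (Ki ⊔ N).mkQ ∘ₗ F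
    have hker : K₀ ≤ LinearMap.ker f := by
      rw [← ht, Submodule.span_le]
      intro z hz
      have : F z ∈ Ki ⊔ N := hKit z hz
      simp only [SetLike.mem_coe, LinearMap.mem_ker, f, LinearMap.comp_apply]
      rwa [← LinearMap.mem_ker, Submodule.ker_mkQ]
    let hi : U →ₗ[R] M ⧸ (Ki ⊔ N) :=
      (Submodule.liftQ K₀ f hker) ∘ₗ (e : U →ₗ[R] L ⧸ K₀)
    have hcompat : qmap (Ki ⊔ N) (sSup c ⊔ N) hle ∘ₗ hi = h := by
      ext u
      obtain ⟨z, hz⟩ := Submodule.mkQ_surjective K₀ (e u)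
      simp only [LinearMap.comp_apply, hi]
      rw [show (e : U →ₗ[R] L ⧸ K₀) u = K₀.mkQ z from hz.symm]
      have h1 : Submodule.liftQ K₀ f hker (K₀.mkQ z) = f z := rfl
      rw [h1]
      have h2 : qmap (Ki ⊔ N) (sSup c ⊔ N) hle (f z) = (sSup c ⊔ N).mkQ (F z) := rfl
      rw [h2]
      have h3 := LinearMap.congr_fun hF z
      simp only [LinearMap.comp_apply] at h3
      rw [h3, hz]
      simp
    obtain ⟨gi, hgi⟩ := (hc hKi).2 U hU hi
    refine ⟨qmap Ki (sSup c) hleK ∘ₗ gi, ?_⟩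
    ext u
    obtain ⟨w, hw⟩ := Submodule.mkQ_surjective Ki (gi u)
    have h4 : hi u = (Ki ⊔ N).mkQ w := by
      have := LinearMap.congr_fun hgi u
      simp only [LinearMap.comp_apply] at this
      rw [← this, ← hw]
      simp
    have h5 : h u = (sSup c ⊔ N).mkQ w := by
      have := LinearMap.congr_fun hcompat u
      simp only [LinearMap.comp_apply] at this
      rw [← this, h4]
      simp
    simp only [LinearMap.comp_apply, ← hw, h5]
    simp

end Stmt13Aux

open Stmt13Aux in
/-- if `N` is an `S`-pure submodule of `M`, there is `K ≤ M` with
`K ∩ N = 0` such that `M/K` is an `S`-pure essential extension of `(K + N)/K`. -/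
theorem stmt13 [Ring R] (S : Set (ModuleCat.{u} R))
    (hfp : ∀ U ∈ S, Module.FinitePresentation R U)
    {M : Type u} [AddCommGroup M] [Module R M] (N : Submodule R M)
    (hN : IsSPureSubmodule S N) :
    ∃ K : Submodule R M, K ⊓ N = ⊥ ∧
      IsSPureEssentialExtension S ((K ⊔ N).map K.mkQ) := by
  obtain ⟨K, -, hKmax⟩ := zorn_le_nonempty₀ {K : Submodule R M | Good S N K}
    (fun c hc hchain y hy => ⟨sSup c, good_chain S N hfp c hc hchain hy,
      fun z hz => le_sSup hz⟩) ⊥ (good_bot S N hN)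
  have hK : Good S N K := hKmax.prop
  refine ⟨K, hK.1, good_translate S N hK, ?_⟩
  intro L _ _ φ hφ
  set N' : Submodule R (M ⧸ K) := (K ⊔ N).map K.mkQ with hN'
  set Φ : M →ₗ[R] L := φ ∘ₗ K.mkQ with hΦ
  set K' : Submodule R M := LinearMap.ker Φ with hK'
  have hKK' : K ≤ K' := by
    intro x hx
    simp only [hK', LinearMap.mem_ker, hΦ, LinearMap.comp_apply]
    rw [show K.mkQ x = 0 from (Submodule.Quotient.mk_eq_zero K).2 hx]
    simp
  have hΦN : ∀ n ∈ N, Φ n ∈ LinearMap.range (φ ∘ₗ N'.subtype) := by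
    intro n hn
    have hmem : K.mkQ n ∈ N' := Submodule.mem_map_of_mem (le_sup_right (a := K) hn)
    exact ⟨⟨K.mkQ n, hmem⟩, rfl⟩
  -- K' is good
  have hK'good : Good S N K' := by
    constructor
    · rw [eq_bot_iff]
      rintro x ⟨hx1, hx2⟩
      have hmem : K.mkQ x ∈ N' := Submodule.mem_map_of_mem (le_sup_right (a := K) hx2)
      have h0 : (φ ∘ₗ N'.subtype) ⟨K.mkQ x, hmem⟩ = 0 := hx1
      have := hφ.1 (by rw [h0, map_zero] : (φ ∘ₗ N'.subtype) ⟨K.mkQ x, hmem⟩ =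
        (φ ∘ₗ N'.subtype) 0)
      have hx0 : K.mkQ x = 0 := congrArg Subtype.val this
      have hxK : x ∈ K := (Submodule.Quotient.mk_eq_zero K).1 hx0
      have : x ∈ K ⊓ N := ⟨hxK, hx2⟩
      rw [hK.1] at this
      exact this
    · intro U hU h
      set NL : Submodule R L := LinearMap.range (φ ∘ₗ N'.subtype) with hNL
      have hpure : SPureLift S NL.mkQ := hφ.2
      -- ψ : M/K' → L
      have hK'ker : K' ≤ LinearMap.ker Φ := le_refl _
      set ψ : (M ⧸ K') →ₗ[R] L := Submodule.liftQ K' Φ hK'ker with hψdef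
      have hψinj : Function.Injective ψ :=
        LinearMap.ker_eq_bot.1 (Submodule.ker_liftQ_eq_bot K' Φ hK'ker (le_refl _))
      -- ψbar : M/(K'⊔N) → L/NL
      have hbarker : K' ⊔ N ≤ LinearMap.ker (NL.mkQ ∘ₗ Φ) := by
        refine sup_le ?_ ?_
        · intro x hx
          simp only [LinearMap.mem_ker, LinearMap.comp_apply]
          rw [show Φ x = 0 from hx]
          simp
        · intro n hn
          simp only [LinearMap.mem_ker, LinearMap.comp_apply]
          exact (Submodule.Quotient.mk_eq_zero NL).2 (hΦN n hn)
      set ψbar : (M ⧸ (K' ⊔ N)) →ₗ[R] L ⧸ NL :=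
        Submodule.liftQ (K' ⊔ N) (NL.mkQ ∘ₗ Φ) hbarker with hψbardef
      have hψbarinj : Function.Injective ψbar := by
        refine LinearMap.ker_eq_bot.1 (Submodule.ker_liftQ_eq_bot _ _ _ ?_)
        intro x hx
        simp only [LinearMap.mem_ker, LinearMap.comp_apply] at hx
        have : Φ x ∈ NL := (Submodule.Quotient.mk_eq_zero NL).1 hx
        obtain ⟨⟨a, hamem⟩, ha⟩ := this
        obtain ⟨w, hw, rfl⟩ := hamem
        obtain ⟨k, hk, n, hn, rfl⟩ := Submodule.mem_sup.1 hw
        have hΦk : Φ k = 0 := hKK' hk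
        have hΦn : Φ n = Φ (k + n) := by rw [map_add, hΦk, zero_add]
        have hΦeq : Φ (k + n) = Φ x := ha
        have : Φ (x - n) = 0 := by rw [map_sub, hΦn, hΦeq, sub_self]
        have hxn : x - n ∈ K' := this
        have : x = (x - n) + n := by abel
        rw [this]
        exact Submodule.mem_sup.2 ⟨x - n, hxn, n, hn, rfl⟩
      obtain ⟨g, hg⟩ := hpure U hU (ψbar ∘ₗ h)
      have hNLle : NL ≤ LinearMap.range ψ := by
        rintro y ⟨⟨a, hamem⟩, ha⟩
        obtain ⟨w, hw, rfl⟩ := hamem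
        exact ⟨K'.mkQ w, ha⟩
      have hsquare : ∀ y : M ⧸ K', ψbar (qmap K' (K' ⊔ N) le_sup_left y) = NL.mkQ (ψ y) := by
        intro y
        refine Submodule.Quotient.induction_on _ y fun x => ?_
        rfl
      have hmemrange : ∀ u : U, g u ∈ LinearMap.range ψ := by
        intro u
        obtain ⟨xu, hxu⟩ := Submodule.mkQ_surjective (K' ⊔ N) (h u)
        have h1 : NL.mkQ (g u) = ψbar (h u) := LinearMap.congr_fun hg u
        have h2 : ψbar (h u) = NL.mkQ (Φ xu) := by rw [← hxu]; rfl
        have h3 : g u - Φ xu ∈ NL := by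
          rw [← Submodule.Quotient.mk_eq_zero NL, Submodule.Quotient.mk_sub]
          rw [show Submodule.Quotient.mk (g u) = NL.mkQ (g u) from rfl,
            show Submodule.Quotient.mk (Φ xu) = NL.mkQ (Φ xu) from rfl, h1, h2]
          simp
        have h4 : g u - Φ xu ∈ LinearMap.range ψ := hNLle h3
        have h5 : Φ xu ∈ LinearMap.range ψ := ⟨K'.mkQ xu, rfl⟩
        have := add_mem h4 h5
        simpa using this
      set eψ := LinearEquiv.ofInjective ψ hψinj with heψ
      set g' : U →ₗ[R] M ⧸ K' :=
        (eψ.symm : LinearMap.range ψ →ₗ[R] M ⧸ K') ∘ₗ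
          g.codRestrict (LinearMap.range ψ) hmemrange with hg'def
      refine ⟨g', ?_⟩
      ext u
      refine hψbarinj ?_
      have hψg' : ψ (g' u) = g u := by
        have : (eψ (g' u) : L) = ψ (g' u) := rfl
        rw [← this, hg'def]
        simp only [LinearMap.comp_apply, LinearEquiv.coe_coe]
        rw [eψ.apply_symm_apply]
        rfl
      rw [LinearMap.comp_apply, hsquare, hψg']
      have h1 : NL.mkQ (g u) = ψbar (h u) := LinearMap.congr_fun hg u
      exact h1
  -- maximality forces K' = K
  have hK'eq : K' = K := le_antisymm (hKmax.2 hK'good hKK') hKK'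
  -- conclude φ injective
  rw [← LinearMap.ker_eq_bot]
  rw [eq_bot_iff]
  intro y hy
  obtain ⟨x, rfl⟩ := Submodule.mkQ_surjective K y
  have hx : x ∈ K' := by
    simp only [hK', LinearMap.mem_ker, hΦ, LinearMap.comp_apply]
    exact hy
  rw [hK'eq] at hx
  simp only [Submodule.mem_bot]
  exact (Submodule.Quotient.mk_eq_zero K).2 hx
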